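/- Let U ⊆ ℝ^N be a nonempty bounded open set and let f ∈ L¹(ℝ^N) satisfy f ≥ 1 a.e. on U. Then for every δ > 0 there exists η > 0 such that every g ∈ L¹(ℝ^N) with ‖g − f‖_{L¹(ℝ^N)} < η satisfies: for every x ∈ U, the set {y ∈ B_δ(x) : g(y) > 0} has positive Lebesgue measure; in particular U is contained in the open δ-neighborhood V_δ({g > 0}) of the positivity set of (any representative of) g. -/

import Mathlib

open MeasureTheory Metric Set Filter Real
open scoped ENNReal RealInnerProductSpace

noncomputable section

/-- Euclidean space `ℝ^N`. -/
abbrev Euc (N : ℕ) : Type := EuclideanSpace ℝ (Fin N)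

/-- The spatial Laplacian of a function on `ℝ^N`. -/
def lap {N : ℕ} (φ : Euc N → ℝ) (x : Euc N) : ℝ :=
  ∑ i : Fin N, fderiv ℝ (fderiv ℝ φ) x (EuclideanSpace.single i 1) (EuclideanSpace.single i 1)

/-- Smooth, compactly supported test functions on `ℝ^N`. -/
def IsTestFun {N : ℕ} (φ : Euc N → ℝ) : Prop :=
  ContDiff ℝ (⊤ : ℕ∞) φ ∧ HasCompactSupport φ

/-- Smooth test functions compactly supported in `Q = ℝ^N × (0,∞)`. -/
def IsTestFunQ {N : ℕ} (φ : Euc N × ℝ → ℝ) : Prop :=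
  ContDiff ℝ (⊤ : ℕ∞) φ ∧ HasCompactSupport φ ∧ tsupport φ ⊆ {q : Euc N × ℝ | 0 < q.2}

/-- The parabolic domain `Q = ℝ^N × (0,∞)`. -/
def Qset (N : ℕ) : Set (Euc N × ℝ) := Set.univ ×ˢ Set.Ioi (0 : ℝ)

/-- **L¹-stability of positivity sets (proof of Lemma 7.2).** If `f ≥ 1` a.e. on a
nonempty bounded open set `U`, then any `g` close enough to `f` in `L¹` has, around each
point of `U`, a set of positivity of positive measure within distance `δ`; in particular
`U ⊆ V_δ({g > 0})`. -/
theorem L1_stability_positivity {N : ℕ} (hN : 1 ≤ N)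
    (U : Set (Euc N)) (hUopen : IsOpen U) (hUne : U.Nonempty)
    (hUbdd : Bornology.IsBounded U)
    (f : Euc N → ℝ) (hf : Integrable f) (hf1 : ∀ᵐ x : Euc N ∂volume, x ∈ U → 1 ≤ f x)
    (δ : ℝ) (hδ : 0 < δ) :
    ∃ η : ℝ, 0 < η ∧ ∀ g : Euc N → ℝ, Integrable g → (∫ x, |g x - f x|) < η →
      (∀ x ∈ U, 0 < volume {y : Euc N | y ∈ ball x δ ∧ 0 < g y}) ∧
      U ⊆ {x : Euc N | ∃ y : Euc N, 0 < g y ∧ dist x y < δ} := by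
  classical
  have hδ2 : 0 < δ / 2 := by linarith
  -- compactness of the closure and finite subcover by balls of radius δ/2
  have hK : IsCompact (closure U) :=
    Metric.isCompact_of_isClosed_isBounded isClosed_closure hUbdd.closure
  obtain ⟨t, ht⟩ := hK.elim_finite_subcover (fun c : Euc N => ball c (δ / 2))
    (fun c => isOpen_ball)
    (fun x hx => Set.mem_iUnion.2 ⟨x, mem_ball_self hδ2⟩)
  set t' : Finset (Euc N) := t.filter (fun c => (ball c (δ / 2) ∩ U).Nonempty) with ht'
  -- every point of U lies in a ball from t'
  have hcov : ∀ x ∈ U, ∃ c ∈ t', x ∈ ball c (δ / 2) := by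
    intro x hx
    have := ht (subset_closure hx)
    simp only [Set.mem_iUnion] at this
    obtain ⟨c, hc, hxc⟩ := this
    exact ⟨c, Finset.mem_filter.2 ⟨hc, ⟨x, hxc, hx⟩⟩, hxc⟩
  have ht'ne : t'.Nonempty := by
    obtain ⟨x, hx⟩ := hUne
    obtain ⟨c, hc, -⟩ := hcov x hx
    exact ⟨c, hc⟩
  have hUfin : volume U < ∞ := hUbdd.measure_lt_top
  have hposvol : ∀ c ∈ t', 0 < volume (ball c (δ / 2) ∩ U) := by
    intro c hc
    obtain ⟨-, hne⟩ := Finset.mem_filter.1 hc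
    exact (isOpen_ball.inter hUopen).measure_pos volume hne
  set m : ℝ≥0∞ := t'.inf' ht'ne (fun c => volume (ball c (δ / 2) ∩ U)) with hm
  have hmpos : 0 < m := by
    rw [hm, Finset.lt_inf'_iff]
    exact hposvol
  have hmne : m ≠ ∞ := by
    obtain ⟨c, hc⟩ := ht'ne
    have h1 : m ≤ volume (ball c (δ / 2) ∩ U) := Finset.inf'_le _ hc
    have h2 : volume (ball c (δ / 2) ∩ U) ≤ volume U :=
      measure_mono Set.inter_subset_right
    exact ((h1.trans h2).trans_lt hUfin).ne
  refine ⟨m.toReal, ENNReal.toReal_pos hmpos.ne' hmne, fun g hg hgf => ?_⟩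
  have key : ∀ x ∈ U, 0 < volume {y : Euc N | y ∈ ball x δ ∧ 0 < g y} := by
    intro x hx
    by_contra hzero
    push_neg at hzero
    have hzero' : volume {y : Euc N | y ∈ ball x δ ∧ 0 < g y} = 0 := le_antisymm hzero bot_le
    obtain ⟨c, hc, hxc⟩ := hcov x hx
    set A : Set (Euc N) := ball c (δ / 2) ∩ U with hA
    have hAmeas : MeasurableSet A := (isOpen_ball.inter hUopen).measurableSet
    have hAsub : A ⊆ ball x δ := by
      intro y hy
      have h1 : dist y c < δ / 2 := mem_ball.1 hy.1
      have h2 : dist x c < δ / 2 := mem_ball.1 hxc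
      have : dist y x ≤ dist y c + dist c x := dist_triangle y c x
      rw [dist_comm c x] at this
      exact mem_ball.2 (by linarith)
    have hAfin : volume A < ∞ := (measure_mono Set.inter_subset_right).trans_lt hUfin
    -- a.e. on A : 1 ≤ |g y - f y|
    have hgle : ∀ᵐ y ∂volume, ¬(y ∈ ball x δ ∧ 0 < g y) := by
      rw [ae_iff]
      convert hzero' using 2
      ext y; simp
    have haeA : ∀ᵐ y ∂(volume.restrict A), 1 ≤ |g y - f y| := by
      filter_upwards [ae_restrict_mem hAmeas, ae_restrict_of_ae hgle,
        ae_restrict_of_ae hf1] with y hyA hyg hyf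
      have hfy : 1 ≤ f y := hyf hyA.2
      have hgy : g y ≤ 0 := by
        by_contra hgy
        push_neg at hgy
        exact hyg ⟨hAsub hyA, hgy⟩
      rw [abs_sub_comm, abs_of_nonneg (by linarith)]
      linarith
    have hint1 : (volume A).toReal ≤ ∫ y in A, |g y - f y| := by
      have := setIntegral_mono_ae_restrict
        (integrableOn_const hAfin.ne : IntegrableOn (fun _ => (1:ℝ)) A volume)
        ((hg.sub hf).abs.integrableOn) haeA
      simpa [setIntegral_const, Measure.real] using this
    have hint2 : (∫ y in A, |g y - f y|) ≤ ∫ y, |g y - f y| :=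
      setIntegral_le_integral (hg.sub hf).abs
        (Filter.Eventually.of_forall fun y => abs_nonneg _)
    have hmA : m.toReal ≤ (volume A).toReal :=
      ENNReal.toReal_mono hAfin.ne (Finset.inf'_le _ hc)
    linarith
  refine ⟨key, fun x hx => ?_⟩
  obtain ⟨y, hy⟩ := nonempty_of_measure_ne_zero (key x hx).ne'
  exact ⟨y, hy.2, by rw [dist_comm]; exact mem_ball.1 hy.1⟩
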